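/- Let q ≥ 2 be an integer and a an integer with a² ≤ 4q, and let α, β ∈ ℂ be the two roots of x² − ax + q. Then α/β is a root of unity if and only if a² ∈ {0, q, 2q, 3q, 4q}; moreover, the multiplicative order of α/β equals 1, 2, 3, 4, or 6 according as a² = 4q, a² = 0, a² = q, a² = 2q, or a² = 3q. -/

import Mathlib

private def seq (p r : ℤ) : ℕ → ℤ
  | 0 => 2
  | 1 => p
  | n + 2 => p * seq p r (n + 1) - r ^ 2 * seq p r n

private lemma seq_spec (p r : ℤ) (z w : ℂ) (hw : z * w = 1)
    (h1 : (z + w) * (r : ℂ) = (p : ℂ)) :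
    ∀ n, (z ^ n + w ^ n) * (r : ℂ) ^ n = ((seq p r n : ℤ) : ℂ)
  | 0 => by norm_num [seq]
  | 1 => by simpa [seq] using h1
  | (n + 2) => by
    have e0 := seq_spec p r z w hw h1 n
    have e1 := seq_spec p r z w hw h1 (n + 1)
    simp only [seq]
    push_cast
    rw [← e1, ← e0, ← h1]
    linear_combination (-((r : ℂ)) ^ (n + 2) * (z ^ n + w ^ n)) * hw

private lemma seq_coprime (p r : ℤ) (hpr : IsCoprime p r) :
    ∀ n, IsCoprime (seq p r (n + 1)) r
  | 0 => by simpa [seq] using hpr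
  | (n + 1) => by
    have ih := seq_coprime p r hpr n
    have h2 : IsCoprime (p * seq p r (n + 1) + r * (-(r * seq p r n))) r :=
      (hpr.mul_left ih).add_mul_left_left _
    have e : p * seq p r (n + 1) - r ^ 2 * seq p r n
        = p * seq p r (n + 1) + r * (-(r * seq p r n)) := by ring
    show IsCoprime (seq p r (n + 2)) r
    simp only [seq]
    rw [e]
    exact h2

set_option maxHeartbeats 1000000 in
theorem root_of_unity_classification
    (q a : ℤ) (hq : 2 ≤ q) (ha : a ^ 2 ≤ 4 * q)
    (α β : ℂ) (hsum : α + β = (a : ℂ)) (hprod : α * β = (q : ℂ)) :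
    ((∃ k : ℕ, 0 < k ∧ (α / β) ^ k = 1) ↔
      a ^ 2 ∈ ({0, q, 2 * q, 3 * q, 4 * q} : Set ℤ)) ∧
    (a ^ 2 = 4 * q → orderOf (α / β) = 1) ∧
    (a ^ 2 = 0 → orderOf (α / β) = 2) ∧
    (a ^ 2 = q → orderOf (α / β) = 3) ∧
    (a ^ 2 = 2 * q → orderOf (α / β) = 4) ∧
    (a ^ 2 = 3 * q → orderOf (α / β) = 6) := by
  have hq0 : (q : ℂ) ≠ 0 := by
    simp only [ne_eq, Int.cast_eq_zero]; omega
  have hβ : β ≠ 0 := by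
    intro h; apply hq0; rw [← hprod, h, mul_zero]
  have hα : α ≠ 0 := by
    intro h; apply hq0; rw [← hprod, h, zero_mul]
  have hsum2 : α ^ 2 + β ^ 2 = (a : ℂ) ^ 2 - 2 * q := by
    linear_combination (α + β + (a : ℂ)) * hsum - 2 * hprod
  have key : (q : ℂ) * (α / β) ^ 2 - ((a : ℂ) ^ 2 - 2 * q) * (α / β) + q = 0 := by
    have keyP : (q : ℂ) * α ^ 2 - ((a : ℂ) ^ 2 - 2 * q) * (α * β) + q * β ^ 2 = 0 := by
      linear_combination (q : ℂ) * hsum2 - ((a : ℂ) ^ 2 - 2 * (q : ℂ)) * hprod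
    field_simp
    linear_combination keyP
  -- case equations
  have hz1 : a ^ 2 = 4 * q → α / β = 1 := by
    intro h
    have hc : (a : ℂ) ^ 2 = 4 * q := by exact_mod_cast h
    have h2 : (q : ℂ) * (α / β - 1) ^ 2 = 0 := by
      linear_combination key + (α / β) * hc
    have h3 := (mul_eq_zero.mp h2).resolve_left hq0
    exact sub_eq_zero.mp (pow_eq_zero_iff two_ne_zero |>.mp h3)
  have hz2 : a ^ 2 = 0 → α / β = -1 := by
    intro h
    have hc : (a : ℂ) ^ 2 = 0 := by exact_mod_cast h
    have h2 : (q : ℂ) * (α / β + 1) ^ 2 = 0 := by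
      linear_combination key + (α / β) * hc
    have h3 := (mul_eq_zero.mp h2).resolve_left hq0
    have h4 := pow_eq_zero_iff two_ne_zero |>.mp h3
    exact eq_neg_of_add_eq_zero_left h4
  have hz3 : a ^ 2 = q → (α / β) ^ 2 + (α / β) + 1 = 0 := by
    intro h
    have hc : (a : ℂ) ^ 2 = q := by exact_mod_cast h
    have h2 : (q : ℂ) * ((α / β) ^ 2 + (α / β) + 1) = 0 := by
      linear_combination key + (α / β) * hc
    exact (mul_eq_zero.mp h2).resolve_left hq0
  have hz4 : a ^ 2 = 2 * q → (α / β) ^ 2 + 1 = 0 := by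
    intro h
    have hc : (a : ℂ) ^ 2 = 2 * q := by exact_mod_cast h
    have h2 : (q : ℂ) * ((α / β) ^ 2 + 1) = 0 := by
      linear_combination key + (α / β) * hc
    exact (mul_eq_zero.mp h2).resolve_left hq0
  have hz5 : a ^ 2 = 3 * q → (α / β) ^ 2 - (α / β) + 1 = 0 := by
    intro h
    have hc : (a : ℂ) ^ 2 = 3 * q := by exact_mod_cast h
    have h2 : (q : ℂ) * ((α / β) ^ 2 - (α / β) + 1) = 0 := by
      linear_combination key + (α / β) * hc
    exact (mul_eq_zero.mp h2).resolve_left hq0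
  -- orders
  have o1 : a ^ 2 = 4 * q → orderOf (α / β) = 1 := by
    intro h; rw [hz1 h]; exact orderOf_one
  have o2 : a ^ 2 = 0 → orderOf (α / β) = 2 := by
    intro h; rw [hz2 h]
    exact orderOf_eq_prime (by norm_num) (by norm_num)
  have o3 : a ^ 2 = q → orderOf (α / β) = 3 := by
    intro h
    have hz := hz3 h
    refine orderOf_eq_prime ?_ ?_
    · linear_combination ((α / β) - 1) * hz
    · intro hcon; rw [hcon] at hz; norm_num at hz
  have o4 : a ^ 2 = 2 * q → orderOf (α / β) = 4 := by
    intro h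
    have hz := hz4 h
    rw [orderOf_eq_iff (by norm_num)]
    refine ⟨by linear_combination ((α / β) ^ 2 - 1) * hz, ?_⟩
    intro m hm hm0 hcon
    interval_cases m
    · have h0 : (2 : ℂ) = 0 := by linear_combination hz - ((α / β) + 1) * hcon
      norm_num at h0
    · have h0 : (2 : ℂ) = 0 := by linear_combination hz - hcon
      norm_num at h0
    · have h0 : (2 : ℂ) = 0 := by
        linear_combination (1 - (α / β) * ((α / β) - 1)) * hz + ((α / β) - 1) * hcon
      norm_num at h0
  have o6 : a ^ 2 = 3 * q → orderOf (α / β) = 6 := by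
    intro h
    have hz := hz5 h
    rw [orderOf_eq_iff (by norm_num)]
    refine ⟨by linear_combination ((α / β) ^ 3 - 1) * ((α / β) + 1) * hz, ?_⟩
    intro m hm hm0 hcon
    interval_cases m
    · have h0 : (1 : ℂ) = 0 := by linear_combination hz - (α / β) * hcon
      norm_num at h0
    · have h0 : (3 : ℂ) = 0 := by
        linear_combination ((α / β) + 2) * hz - ((α / β) + 1) * hcon
      norm_num at h0
    · have h0 : (2 : ℂ) = 0 := by linear_combination ((α / β) + 1) * hz - hcon
      norm_num at h0
    · have h0 : (3 : ℂ) = 0 := by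
        linear_combination (1 - ((α / β) - 2) * ((α / β) ^ 2 + (α / β))) * hz
          + ((α / β) - 2) * hcon
      norm_num at h0
    · have h0 : (1 : ℂ) = 0 := by
        linear_combination (1 - ((α / β) - 1) * ((α / β) ^ 3 + (α / β) ^ 2 - 1)) * hz
          + ((α / β) - 1) * hcon
      norm_num at h0
  refine ⟨⟨?_, ?_⟩, o1, o2, o3, o4, o6⟩
  · -- forward direction
    rintro ⟨k, hk0, hk⟩
    obtain ⟨T, hTdef⟩ : ∃ t : ℚ, t = ((a ^ 2 - 2 * q : ℤ) : ℚ) / ((q : ℤ) : ℚ) := ⟨_, rfl⟩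
    have hqQ : ((q : ℤ) : ℚ) ≠ 0 := by
      simp only [ne_eq, Int.cast_eq_zero]; omega
    have hTq : T * ((q : ℤ) : ℚ) = ((a ^ 2 - 2 * q : ℤ) : ℚ) := by
      rw [hTdef]; exact div_mul_cancel₀ _ hqQ
    have hden : ((T.den : ℚ)) ≠ 0 := by
      exact_mod_cast T.den_nz
    have hnum : (T.num : ℚ) = T * (T.den : ℚ) :=
      ((eq_div_iff hden).mp (Rat.num_div_den T).symm).symm
    have hZ : T.num * q = (a ^ 2 - 2 * q) * (T.den : ℤ) := by
      have : (T.num : ℚ) * ((q : ℤ) : ℚ) = ((a ^ 2 - 2 * q : ℤ) : ℚ) * (T.den : ℚ) := by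
        rw [hnum]
        calc T * (T.den : ℚ) * ((q : ℤ) : ℚ) = T * ((q : ℤ) : ℚ) * (T.den : ℚ) := by ring
        _ = ((a ^ 2 - 2 * q : ℤ) : ℚ) * (T.den : ℚ) := by rw [hTq]
      exact_mod_cast this
    have hpr : IsCoprime T.num ((T.den : ℤ)) := by
      rw [Int.isCoprime_iff_gcd_eq_one]
      simpa [Int.gcd] using T.reduced
    -- relation in ℂ
    have hZC : (T.num : ℂ) * (q : ℂ) = ((a : ℂ) ^ 2 - 2 * q) * ((T.den : ℤ) : ℂ) := by
      exact_mod_cast hZ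
    have hzw : α / β + β / α = ((a : ℂ) ^ 2 - 2 * q) / q := by
      rw [div_add_div _ _ hβ hα, div_eq_div_iff (mul_ne_zero hβ hα) hq0]
      linear_combination (q : ℂ) * hsum2 - ((a : ℂ) ^ 2 - 2 * (q : ℂ)) * hprod
    have h1 : (α / β + β / α) * (((T.den : ℤ) : ℂ)) = (T.num : ℂ) := by
      rw [hzw, div_mul_eq_mul_div, div_eq_iff hq0]
      linear_combination -hZC
    have hw : (α / β) * (β / α) = 1 := by
      field_simp
    have hwk : (β / α) ^ k = 1 := by
      have h2 : (α / β) ^ k * (β / α) ^ k = 1 := by rw [← mul_pow, hw, one_pow]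
      rwa [hk, one_mul] at h2
    have hA := seq_spec T.num ((T.den : ℤ)) (α / β) (β / α) hw h1 k
    rw [hk, hwk] at hA
    have hAZ : (2 : ℤ) * ((T.den : ℤ)) ^ k = seq T.num ((T.den : ℤ)) k := by
      have h2 : ((2 * ((T.den : ℤ)) ^ k : ℤ) : ℂ)
          = ((seq T.num ((T.den : ℤ)) k : ℤ) : ℂ) := by
        push_cast
        linear_combination hA
      exact_mod_cast h2
    obtain ⟨k', rfl⟩ : ∃ k', k = k' + 1 := ⟨k - 1, by omega⟩
    have hdvd : ((T.den : ℤ)) ∣ seq T.num ((T.den : ℤ)) (k' + 1) := by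
      rw [← hAZ]
      exact Dvd.dvd.mul_left (dvd_pow_self _ (Nat.succ_ne_zero k')) 2
    have hu : IsUnit ((T.den : ℤ)) :=
      ((seq_coprime T.num ((T.den : ℤ)) hpr k').symm).isUnit_of_dvd hdvd
    have hr1 : ((T.den : ℤ)) = 1 := by
      rcases Int.isUnit_iff.mp hu with h | h
      · exact h
      · omega
    have ha2 : a ^ 2 = (T.num + 2) * q := by
      rw [hr1] at hZ
      linear_combination -hZ
    have hp1 : 0 ≤ T.num + 2 := by nlinarith [sq_nonneg a]
    have hp2 : T.num + 2 ≤ 4 := by nlinarith [sq_nonneg a]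
    simp only [Set.mem_insert_iff, Set.mem_singleton_iff]
    have hb1 : -2 ≤ T.num := by omega
    have hb2 : T.num ≤ 2 := by omega
    obtain ⟨p, hp⟩ : ∃ p, T.num = p := ⟨_, rfl⟩
    rw [hp] at ha2 hb1 hb2
    have hcase : p = -2 ∨ p = -1 ∨ p = 0 ∨ p = 1 ∨ p = 2 := by omega
    rcases hcase with rfl | rfl | rfl | rfl | rfl
    · exact Or.inl (by linarith)
    · exact Or.inr (Or.inl (by linarith))
    · exact Or.inr (Or.inr (Or.inl (by linarith)))
    · exact Or.inr (Or.inr (Or.inr (Or.inl (by linarith))))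
    · exact Or.inr (Or.inr (Or.inr (Or.inr (by linarith))))
  · -- reverse direction
    intro hmem
    simp only [Set.mem_insert_iff, Set.mem_singleton_iff] at hmem
    rcases hmem with h | h | h | h | h
    · exact ⟨2, by norm_num, by rw [← o2 h]; exact pow_orderOf_eq_one _⟩
    · exact ⟨3, by norm_num, by rw [← o3 h]; exact pow_orderOf_eq_one _⟩
    · exact ⟨4, by norm_num, by rw [← o4 h]; exact pow_orderOf_eq_one _⟩
    · exact ⟨6, by norm_num, by rw [← o6 h]; exact pow_orderOf_eq_one _⟩
    · exact ⟨1, by norm_num, by rw [← o1 h]; exact pow_orderOf_eq_one _⟩
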